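/- Let $A$ be a unital complex Banach algebra, $p(\lambda)=\prod_{i=1}^n(\lambda-\lambda_i)$ with distinct roots, and $a_0, a_1 \in E_p(A) = \{a : p(a) = 0\}$. If $\|a_1 - a_0\|$ is sufficiently small (depending on $a_0$ and the $\lambda_i$), then there exists an invertible $s \in A$ with $a_1 = s^{-1} a_0 s$, and moreover $s = e^c$ for some $c \in A$. -/

import Mathlib

open Polynomial

section Aux

variable {A : Type*} [NormedRing A] [NormedAlgebra ℂ A] [CompleteSpace A] [NormOneClass A]

omit [NormOneClass A] in
/-- Near `1`, every element is an exponential. -/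
theorem stmt7_exp_surj : ∀ᶠ u in nhds (1 : A), ∃ c : A, NormedSpace.exp c = u := by
  have h0 : HasStrictFDerivAt (NormedSpace.exp)
      ((ContinuousLinearEquiv.refl ℂ A : A →L[ℂ] A)) (0 : A) := by
    simpa [ContinuousLinearMap.one_def] using
      (hasStrictFDerivAt_exp_zero (𝕂 := ℂ) (𝔸 := A))
  have hmap := h0.map_nhds_eq_of_equiv
  rw [NormedSpace.exp_zero] at hmap
  rw [← hmap]
  exact Filter.eventually_map.mpr (Filter.Eventually.of_forall fun c => ⟨c, rfl⟩)

end Aux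

/-- Two elements of `E_p(A)` that are close enough are similar via an
exponential: `a₁ = e^{-c} a₀ e^{c}`. -/
theorem stmt7 {A : Type*} [NormedRing A] [NormedAlgebra ℂ A] [CompleteSpace A] [NormOneClass A]
    (n : ℕ) (hn : 2 ≤ n) (l : Fin n → ℂ) (hl : Function.Injective l)
    (Ep : Set A) (hEp : Ep = {a : A | aeval a (∏ i : Fin n, (X - C (l i))) = 0})
    (a₀ : A) (ha₀ : a₀ ∈ Ep) :
    ∃ δ > 0, ∀ a₁ ∈ Ep, ‖a₁ - a₀‖ < δ →
      ∃ c : A, a₁ = NormedSpace.exp (-c) * a₀ * NormedSpace.exp c := by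
  subst hEp
  have hnpos : 0 < n := lt_of_lt_of_le two_pos hn
  haveI : NeZero n := ⟨hnpos.ne'⟩
  set p : ℂ[X] := ∏ i : Fin n, (X - C (l i)) with hp
  -- divisibility criterion
  have hdvd : ∀ q : ℂ[X], (∀ i, q.eval (l i) = 0) → p ∣ q := by
    intro q hq
    refine Finset.prod_dvd_of_coprime
      ((Polynomial.pairwise_coprime_X_sub_C hl).set_pairwise _) fun i _ => ?_
    exact dvd_iff_isRoot.mpr (hq i)
  have key : ∀ b : A, aeval b p = 0 → ∀ q : ℂ[X], (∀ i, q.eval (l i) = 0) →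
      aeval b q = 0 := by
    intro b hb q hq
    obtain ⟨r, hr⟩ := hdvd q hq
    rw [hr, map_mul, hb, zero_mul]
  -- Lagrange basis polynomials
  set L : Fin n → ℂ[X] := fun i => Lagrange.basis Finset.univ l i with hLdef
  have hinj : Set.InjOn l (Finset.univ : Finset (Fin n)) := hl.injOn
  have hEvalSelf : ∀ i, (L i).eval (l i) = 1 := fun i =>
    Lagrange.eval_basis_self hinj (Finset.mem_univ i)
  have hEvalNe : ∀ i j, i ≠ j → (L i).eval (l j) = 0 := fun i j h =>
    Lagrange.eval_basis_of_ne h (Finset.mem_univ j)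
  have hsumL : (∑ i, L i) = 1 := Lagrange.sum_basis hinj Finset.univ_nonempty
  -- algebraic identities for any annihilated element
  have hIdem : ∀ b : A, aeval b p = 0 → ∀ i,
      aeval b (L i) * aeval b (L i) = aeval b (L i) := by
    intro b hb i
    have h := key b hb (L i * L i - L i) (fun k => by
      by_cases hk : i = k
      · subst hk; simp [hEvalSelf i]
      · simp [hEvalNe i k hk])
    have : aeval b (L i * L i) - aeval b (L i) = 0 := by
      simpa [map_sub] using h
    simpa [map_mul, sub_eq_zero] using this
  have hOrth : ∀ b : A, aeval b p = 0 → ∀ i j, i ≠ j →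
      aeval b (L i) * aeval b (L j) = 0 := by
    intro b hb i j hij
    have h := key b hb (L i * L j) (fun k => by
      by_cases hk : i = k
      · subst hk; simp [hEvalNe j i (Ne.symm hij)]
      · simp [hEvalNe i k hk])
    simpa [map_mul] using h
  -- `aeval b (L i) * b = l i • aeval b (L i)` and symmetrically
  have hRight : ∀ b : A, aeval b p = 0 → ∀ i,
      aeval b (L i) * b = l i • aeval b (L i) := by
    intro b hb i
    have h := key b hb (L i * X - C (l i) * L i) (fun k => by
      by_cases hk : i = k
      · subst hk; simp [hEvalSelf i]
      · simp [hEvalNe i k hk])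
    have h2 : aeval b (L i) * b - algebraMap ℂ A (l i) * aeval b (L i) = 0 := by
      simpa [map_sub, map_mul, aeval_X, aeval_C] using h
    rw [Algebra.smul_def]
    exact sub_eq_zero.mp h2
  have hLeft : ∀ b : A, aeval b p = 0 → ∀ i,
      b * aeval b (L i) = l i • aeval b (L i) := by
    intro b hb i
    have h := key b hb (X * L i - C (l i) * L i) (fun k => by
      by_cases hk : i = k
      · subst hk; simp [hEvalSelf i]
      · simp [hEvalNe i k hk])
    have h2 : b * aeval b (L i) - algebraMap ℂ A (l i) * aeval b (L i) = 0 := by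
      simpa [map_sub, map_mul, aeval_X, aeval_C] using h
    rw [Algebra.smul_def]
    exact sub_eq_zero.mp h2
  -- the intertwiner
  set g : A → A := fun b => ∑ i, aeval b (L i) * aeval a₀ (L i) with hgdef
  have hg : Continuous g := by
    refine continuous_finset_sum _ fun i _ => ?_
    exact ((L i).continuous_aeval).mul continuous_const
  have ha₀' : aeval a₀ p = 0 := ha₀
  have hg0 : g a₀ = 1 := by
    have : g a₀ = ∑ i, aeval a₀ (L i) := by
      refine Finset.sum_congr rfl fun i _ => hIdem a₀ ha₀' i
    rw [this, ← map_sum, hsumL, map_one]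
  -- the neighborhood where everything works
  have hnhds : {b : A | ∃ c : A, NormedSpace.exp c = g b} ∈ nhds a₀ := by
    exact (hg.continuousAt (x := a₀)).preimage_mem_nhds (by rw [hg0]; exact stmt7_exp_surj)
  obtain ⟨δ, hδpos, hδ⟩ := Metric.mem_nhds_iff.mp hnhds
  refine ⟨δ, hδpos, fun a₁ ha₁ hdist => ?_⟩
  have ha₁' : aeval a₁ p = 0 := ha₁
  obtain ⟨c, hc⟩ := hδ (by simpa [Metric.mem_ball, dist_eq_norm] using hdist)
  -- intertwining relation
  have hinter : a₁ * g a₁ = g a₁ * a₀ := by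
    rw [hgdef]
    simp only [Finset.mul_sum, Finset.sum_mul]
    refine Finset.sum_congr rfl fun i _ => ?_
    rw [← mul_assoc, hLeft a₁ ha₁' i, mul_assoc, hRight a₀ ha₀' i,
      smul_mul_assoc, mul_smul_comm]
  -- exponential inverse
  have hcomm : Commute c (-c) := (Commute.refl c).neg_right
  letI : NormedAlgebra ℚ A := .restrictScalars ℚ ℂ A
  have hmul1 : NormedSpace.exp c * NormedSpace.exp (-c) = 1 := by
    rw [← NormedSpace.exp_add_of_commute hcomm, add_neg_cancel, NormedSpace.exp_zero]
  have hmul2 : NormedSpace.exp (-c) * NormedSpace.exp c = 1 := by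
    rw [← NormedSpace.exp_add_of_commute hcomm.symm, neg_add_cancel, NormedSpace.exp_zero]
  refine ⟨-c, ?_⟩
  rw [neg_neg]
  calc a₁ = a₁ * (NormedSpace.exp c * NormedSpace.exp (-c)) := by rw [hmul1, mul_one]
    _ = (a₁ * NormedSpace.exp c) * NormedSpace.exp (-c) := by rw [mul_assoc]
    _ = (NormedSpace.exp c * a₀) * NormedSpace.exp (-c) := by rw [hc, hinter]
    _ = NormedSpace.exp c * a₀ * NormedSpace.exp (-c) := rfl
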